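/- Let f be a primitive nondegenerate integral quadratic polynomial and let p be a prime. Then there exist an integer k with 0 ≤ k ≤ 1 + ord_p(𝔫₀(f)) + 2δ_{2,p} (where δ_{2,p} = 1 if p = 2 and 0 otherwise) and an element r ∈ ℤₚ such that f represents, over ℤₚ, every element of the coset r + p^k ℤₚ. -/

import Mathlib

noncomputable section

open Matrix

/-- An `n`-ary quadratic polynomial over `ℚ`:
`f(x) = Q(x) + ℓ(x) + m` where `Q(x) = xᵀAx` for a symmetric matrix `A`,
`ℓ(x) = b ⬝ x` is a linear form and `m ∈ ℚ` is a constant. -/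
structure QuadPoly (n : ℕ) where
  A : Matrix (Fin n) (Fin n) ℚ
  hA : A.IsSymm
  b : Fin n → ℚ
  m : ℚ

namespace QuadPoly

variable {n : ℕ}

/-- Evaluation of `f` at a rational point. -/
def eval (f : QuadPoly n) (x : Fin n → ℚ) : ℚ :=
  x ⬝ᵥ f.A.mulVec x + f.b ⬝ᵥ x + f.m

/-- `f` is nondegenerate if its quadratic part is nondegenerate. -/
def Nondegenerate (f : QuadPoly n) : Prop := f.A.det ≠ 0

/-- For a nondegenerate `f`, the unique vector `v ∈ ℚⁿ` such that the linear part of `f`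
equals `2B(v, x)`, where `B(x, y) = xᵀAy` is the symmetric bilinear form of the quadratic
part (so `2 A v = b`, i.e. `v = (1/2) A⁻¹ b`). -/
def v (f : QuadPoly n) : Fin n → ℚ := (2 : ℚ)⁻¹ • f.A⁻¹.mulVec f.b

/-- `Q(v)`, the value of the quadratic part at `v`. -/
def Qv (f : QuadPoly n) : ℚ := f.v ⬝ᵥ f.A.mulVec f.v

/-- `f` is integral: `f(a) ∈ ℤ` for all `a ∈ ℤⁿ`. -/
def Integral (f : QuadPoly n) : Prop :=
  ∀ x : Fin n → ℤ, ∃ z : ℤ, f.eval (fun i => (x i : ℚ)) = (z : ℚ)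

/-- `f` is primitive: it is integral and the set `{f(a) : a ∈ ℤⁿ}` generates the
ideal `ℤ`. -/
def Primitive (f : QuadPoly n) : Prop :=
  f.Integral ∧
    Ideal.span {z : ℤ | ∃ x : Fin n → ℤ, f.eval (fun i => (x i : ℚ)) = (z : ℚ)} = ⊤

/-- `f` is positive: its quadratic part is positive definite and the minimum of `f` on `ℤⁿ`
is nonnegative. -/
def Positive (f : QuadPoly n) : Prop :=
  f.A.PosDef ∧ ∀ x : Fin n → ℤ, 0 ≤ f.eval (fun i => (x i : ℚ))

/-- `f` is complete: `f(x) = Q(x + v)`, i.e. its constant term equals `Q(v)`. -/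
def Complete (f : QuadPoly n) : Prop := f.m = f.Qv

/-- `c` is the conductor of `f`: the smallest positive integer with `c • v ∈ ℤⁿ`. -/
def IsConductor (f : QuadPoly n) (c : ℕ) : Prop :=
  0 < c ∧ (∀ i, ∃ z : ℤ, (c : ℚ) * f.v i = (z : ℚ)) ∧
    ∀ b : ℕ, 0 < b → (∀ i, ∃ z : ℤ, (b : ℚ) * f.v i = (z : ℚ)) → c ≤ b

/-- Evaluation of `f` (coefficients viewed in `ℚ_[p]`) at a `p`-adic point. -/
def evalPadic (f : QuadPoly n) (p : ℕ) [Fact p.Prime] (x : Fin n → ℚ_[p]) : ℚ_[p] :=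
  x ⬝ᵥ (f.A.map ((↑) : ℚ → ℚ_[p])).mulVec x
    + (fun i => ((f.b i : ℚ) : ℚ_[p])) ⬝ᵥ x + ((f.m : ℚ) : ℚ_[p])

/-- Evaluation of `f` (coefficients viewed in `ℝ`) at a real point. -/
def evalReal (f : QuadPoly n) (x : Fin n → ℝ) : ℝ :=
  x ⬝ᵥ (f.A.map ((↑) : ℚ → ℝ)).mulVec x
    + (fun i => ((f.b i : ℚ) : ℝ)) ⬝ᵥ x + ((f.m : ℚ) : ℝ)

/-- `f` is regular: for every `a ∈ ℚ`, the equation `f(x) = a` has a solution in `ℤⁿ`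
if and only if it has a solution in `ℤₚⁿ` for every prime `p` and a solution in `ℝⁿ`. -/
def Regular (f : QuadPoly n) : Prop :=
  ∀ a : ℚ,
    ((∀ (p : ℕ) [Fact p.Prime], ∃ x : Fin n → ℤ_[p],
        f.evalPadic p (fun i => (x i : ℚ_[p])) = (a : ℚ_[p])) ∧
      (∃ x : Fin n → ℝ, f.evalReal x = (a : ℝ)))
    ↔ ∃ x : Fin n → ℤ, f.eval (fun i => (x i : ℚ)) = a

/-- `g` is equivalent to `f`: `g(x) = f(xT + u)` for some `T ∈ GLₙ(ℤ)` and `u ∈ ℤⁿ`. -/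
def Equivalent (f g : QuadPoly n) : Prop :=
  ∃ T : Matrix (Fin n) (Fin n) ℤ, IsUnit T.det ∧ ∃ u : Fin n → ℤ,
    ∀ x : Fin n → ℚ,
      g.eval x = f.eval (x ᵥ* T.map ((↑) : ℤ → ℚ) + fun i => (u i : ℚ))

/-- `𝔫₀(f)`: the ideal of `ℤ` generated by the integer values of
`f₀(x) = Q(x) + 2B(v,x) = f(x) - m`. -/
def nZero (f : QuadPoly n) : Ideal ℤ :=
  Ideal.span {z : ℤ | ∃ x : Fin n → ℤ, f.eval (fun i => (x i : ℚ)) - f.m = (z : ℚ)}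

end QuadPoly



section Aux
open Polynomial


variable {p : ℕ} [Fact p.Prime]

lemma aux_one_lt : (1:ℝ) < p := by exact_mod_cast (Fact.out : p.Prime).one_lt

lemma aux_discrete {A B : ℚ_[p]} (h : ‖A‖ < ‖B‖) : (p:ℝ) * ‖A‖ ≤ ‖B‖ := by
  rcases eq_or_ne A 0 with rfl | hA
  · simpa using norm_nonneg B
  have hB : B ≠ 0 := by
    intro h0; rw [h0, norm_zero] at h; exact absurd h (not_lt.2 (norm_nonneg A))
  rw [Padic.norm_eq_zpow_neg_valuation hA, Padic.norm_eq_zpow_neg_valuation hB] at *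
  have h1 : (1:ℝ) < p := aux_one_lt
  have h2 : -A.valuation < -B.valuation := (zpow_lt_zpow_iff_right₀ h1).1 h
  have h3 : -A.valuation + 1 ≤ -B.valuation := by omega
  calc (p:ℝ) * (p:ℝ) ^ (-A.valuation) = (p:ℝ) ^ (-A.valuation + 1) := by
        rw [zpow_add₀ (ne_of_gt (lt_trans zero_lt_one aux_one_lt)), zpow_one]; ring
    _ ≤ (p:ℝ) ^ (-B.valuation) := zpow_le_zpow_right₀ h1.le h3

lemma aux_hensel {c : ℚ_[p]} (hc : ‖c‖ ≤ (p:ℝ)⁻¹) :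
    ∃ u : ℚ_[p], ‖u‖ ≤ 1 ∧ c * u^2 + u = 1 := by
  have hplt : (p:ℝ)⁻¹ < 1 := inv_lt_one_of_one_lt₀ aux_one_lt
  have hc1 : ‖c‖ < 1 := lt_of_le_of_lt hc hplt
  obtain ⟨C, hCc⟩ : ∃ C : ℤ_[p], (C : ℚ_[p]) = c := ⟨⟨c, hc1.le⟩, rfl⟩
  set F : Polynomial ℤ_[p] := Polynomial.C C * X^2 + X - 1 with hF
  have heval1 : F.eval 1 = C := by simp [hF]
  have hderiv : F.derivative.eval 1 = 2*C + 1 := by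
    simp [hF]; ring
  have hnC : ‖C‖ < 1 := by rwa [PadicInt.norm_def, hCc]
  have hn2C : ‖2*C‖ < 1 := by
    calc ‖2*C‖ = ‖(2:ℤ_[p])‖ * ‖C‖ := norm_mul _ _
      _ ≤ 1 * ‖C‖ := mul_le_mul_of_nonneg_right (PadicInt.norm_le_one 2) (norm_nonneg _)
      _ < 1 := by simpa using hnC
  have hunit : ‖2*C + 1‖ = 1 := by
    have key : (2*C+1) + (-(2*C)) = 1 := by ring
    have hge : (1:ℝ) ≤ ‖2*C+1‖ := by
      by_contra hlt
      push_neg at hlt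
      have := PadicInt.nonarchimedean (2*C+1) (-(2*C))
      rw [key] at this
      simp only [norm_one, norm_neg] at this
      have := le_max_iff.1 this
      rcases this with h | h
      · linarith
      · linarith [hn2C]
    exact le_antisymm (PadicInt.norm_le_one _) hge
  have hnorm : ‖F.eval 1‖ < ‖F.derivative.eval 1‖ ^ 2 := by
    rw [heval1, hderiv, hunit]; simpa using hnC
  obtain ⟨z, hz, -⟩ := hensels_lemma hnorm
  refine ⟨(z : ℚ_[p]), z.2, ?_⟩
  have hzeq : C * z^2 + z - 1 = 0 := by
    have := hz
    simp only [hF, Polynomial.eval_sub, Polynomial.eval_add, Polynomial.eval_mul,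
      Polynomial.eval_pow, Polynomial.eval_X, Polynomial.eval_C, Polynomial.eval_one,
        map_sub, map_add, map_mul, map_pow, Polynomial.aeval_X, Polynomial.aeval_C, map_one,
        Algebra.algebraMap_self, RingHom.id_apply] at this
    linear_combination this
  have hcast := congrArg (fun y : ℤ_[p] => (y : ℚ_[p])) hzeq
  push_cast at hcast
  rw [hCc] at hcast
  linear_combination hcast

lemma aux_key (A d w : ℚ_[p]) (hd : d ≠ 0) (h1 : ‖w‖ ≤ ‖d‖)
    (h2 : (p:ℝ) * (‖A‖ * ‖w‖) ≤ ‖d‖^2) :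
    ∃ s : ℚ_[p], ‖s‖ ≤ 1 ∧ A * s^2 + d * s = w := by
  have hp0 : (0:ℝ) < p := lt_trans zero_lt_one aux_one_lt
  have hdn : (0:ℝ) < ‖d‖ := norm_pos_iff.2 hd
  set c : ℚ_[p] := A * w / d^2 with hc
  have hcn : ‖c‖ ≤ (p:ℝ)⁻¹ := by
    rw [hc, norm_div, norm_mul, norm_pow]
    rw [div_le_iff₀ (pow_pos hdn 2)]
    rw [inv_mul_eq_div, le_div_iff₀ hp0] at *
    nlinarith [norm_nonneg A, norm_nonneg w]
  obtain ⟨u, hu1, hu2⟩ := aux_hensel hcn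
  refine ⟨w / d * u, ?_, ?_⟩
  · rw [norm_mul, norm_div]
    have : ‖w‖ / ‖d‖ ≤ 1 := (div_le_one hdn).2 h1
    calc ‖w‖/‖d‖ * ‖u‖ ≤ 1 * 1 :=
      mul_le_mul this hu1 (norm_nonneg _) zero_le_one
      _ = 1 := one_mul 1
  · have hd2 : d^2 ≠ 0 := pow_ne_zero _ hd
    calc A * (w / d * u)^2 + d * (w / d * u) = (c*u^2+u)*w := by
          rw [hc]; field_simp
      _ = w := by rw [hu2, one_mul]

end Aux

section EvalCast
variable {p : ℕ} [Fact p.Prime] {n : ℕ}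

lemma aux_eval_cast (f : QuadPoly n) (a : Fin n → ℤ) (c : ℚ_[p]) :
    f.evalPadic p (fun i => c * ((a i : ℤ) : ℚ_[p])) =
      ((((fun i => (a i : ℚ)) ⬝ᵥ f.A.mulVec (fun i => (a i : ℚ)) : ℚ)) : ℚ_[p]) * c^2
      + (((f.b ⬝ᵥ (fun i => (a i : ℚ)) : ℚ)) : ℚ_[p]) * c + ((f.m : ℚ) : ℚ_[p]) := by
  classical
  set φ : ℚ →+* ℚ_[p] := Rat.castHom ℚ_[p] with hφ
  have hfun : (fun i => c * ((a i : ℤ) : ℚ_[p])) = c • (φ ∘ fun i => (a i : ℚ)) := by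
    funext i
    simp [hφ, smul_eq_mul]
  rw [QuadPoly.evalPadic, hfun]
  have hmap : f.A.map ((↑) : ℚ → ℚ_[p]) = f.A.map φ := rfl
  rw [hmap]
  have hmv : (f.A.map φ).mulVec (φ ∘ fun i => (a i : ℚ))
      = φ ∘ (f.A.mulVec fun i => (a i : ℚ)) := by
    funext i
    exact (RingHom.map_mulVec φ f.A _ i).symm
  rw [Matrix.mulVec_smul, hmv]
  have hb : (fun i => ((f.b i : ℚ) : ℚ_[p])) = φ ∘ f.b := rfl
  rw [hb]
  rw [smul_dotProduct, dotProduct_smul, dotProduct_smul]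
  rw [← RingHom.map_dotProduct, ← RingHom.map_dotProduct]
  simp only [smul_eq_mul, hφ, Rat.coe_castHom]
  ring
end EvalCast

section Aux2
variable {p : ℕ} [Fact p.Prime]

lemma aux_norm_lb {z : ℤ} (ν : ℕ) (h : ¬ ((p:ℤ)^(ν+1) ∣ z)) :
    (z : ℚ_[p]) ≠ 0 ∧ (p:ℝ)^(-(ν:ℤ)) ≤ ‖(z : ℚ_[p])‖ := by
  have hz : z ≠ 0 := by rintro rfl; exact h (dvd_zero _)
  have hz' : (z : ℚ_[p]) ≠ 0 := Int.cast_ne_zero.2 hz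
  refine ⟨hz', ?_⟩
  have h1 : ¬ (‖(z : ℚ_[p])‖ ≤ (p:ℝ)^(-((ν+1:ℕ)):ℤ)) := by
    rw [Padic.norm_int_le_pow_iff_dvd]
    exact h
  push_neg at h1
  rw [Padic.norm_eq_zpow_neg_valuation hz'] at h1 ⊢
  have h2 : -((ν+1:ℕ):ℤ) < -(z:ℚ_[p]).valuation := (zpow_lt_zpow_iff_right₀ aux_one_lt).1 h1
  refine zpow_le_zpow_right₀ aux_one_lt.le ?_
  push_cast at h2 ⊢
  omega

lemma aux_norm_two :
    (p:ℝ)^(-((if p = 2 then 1 else 0 : ℕ)):ℤ) ≤ ‖(2 : ℚ_[p])‖ ∧ ‖(2:ℚ_[p])‖ ≤ 1 := by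
  have h2cast : (2 : ℚ_[p]) = ((2:ℤ) : ℚ_[p]) := by norm_cast
  constructor
  · by_cases hp2 : p = 2
    · subst hp2
      have : ((2:ℕ) : ℚ_[2]) = (2 : ℚ_[2]) := by norm_cast
      rw [if_pos rfl, ← this, Padic.norm_p]
      norm_num
    · rw [if_neg hp2]
      have hnd : ¬ ((p:ℤ) ∣ 2) := by
        intro hd
        have hpd : p ∣ 2 := by exact_mod_cast hd
        rcases (Nat.prime_dvd_prime_iff_eq (Fact.out : p.Prime) Nat.prime_two).1 hpd with rfl
        exact hp2 rfl
      have := (Padic.norm_intCast_lt_one_iff (k := (2:ℤ))).not.2 hnd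
      push_neg at this
      rw [h2cast]
      simpa using this
  · rw [h2cast]; exact Padic.norm_int_le_one 2
end Aux2

/-- Let `f` be a primitive nondegenerate integral quadratic polynomial and
let `p` be a prime.  Then there exist an integer `k` with
`0 ≤ k ≤ 1 + ord_p(𝔫₀(f)) + 2δ_{2,p}` and an element `r ∈ ℤₚ` such that `f` represents,
over `ℤₚ`, every element of the coset `r + p^k ℤₚ`.  Here `𝔫₀(f) = (g)` with `g > 0`, and
`ord_p(𝔫₀(f))` is the exponent of `p` in `g`. -/
theorem stmt_3 {n : ℕ} (f : QuadPoly n) (hnd : f.Nondegenerate) (hint : f.Integral)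
    (hprim : f.Primitive) (p : ℕ) [Fact p.Prime]
    (g : ℤ) (hgpos : 0 < g) (hgen : f.nZero = Ideal.span {g}) :
    ∃ k : ℕ, k ≤ 1 + g.natAbs.factorization p + 2 * (if p = 2 then 1 else 0) ∧
      ∃ r : ℤ_[p], ∀ t : ℤ_[p], ∃ x : Fin n → ℤ_[p],
        f.evalPadic p (fun i => (x i : ℚ_[p]))
          = (r : ℚ_[p]) + (p : ℚ_[p]) ^ k * (t : ℚ_[p]) := by
  classical
  have hp1 : (1:ℝ) < p := aux_one_lt
  have hppos : (0:ℝ) < p := lt_trans zero_lt_one hp1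
  set ν : ℕ := g.natAbs.factorization p with hν
  set δ : ℕ := if p = 2 then 1 else 0 with hδ
  set k : ℕ := ν + 1 + 2*δ with hk
  have hgne : g.natAbs ≠ 0 := Int.natAbs_ne_zero.2 hgpos.ne'
  -- Step 1: a value of f₀ with controlled p-divisibility
  obtain ⟨d₀, ⟨a, ha⟩, hnd₀⟩ :
      ∃ d₀ : ℤ, (∃ x : Fin n → ℤ, f.eval (fun i => (x i : ℚ)) - f.m = (d₀:ℚ)) ∧
        ¬ ((p:ℤ)^(ν+1) ∣ d₀) := by
    by_contra hcon
    push_neg at hcon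
    have hsub : {z : ℤ | ∃ x : Fin n → ℤ, f.eval (fun i => (x i : ℚ)) - f.m = (z:ℚ)}
        ⊆ (Ideal.span {(p:ℤ)^(ν+1)} : Ideal ℤ) := by
      intro z hz
      rw [SetLike.mem_coe, Ideal.mem_span_singleton]
      exact hcon z hz
    have hle : f.nZero ≤ Ideal.span {(p:ℤ)^(ν+1)} := Ideal.span_le.2 hsub
    have hgmem : g ∈ f.nZero := by rw [hgen]; exact Ideal.mem_span_singleton_self g
    have hdvd : (p:ℤ)^(ν+1) ∣ g := Ideal.mem_span_singleton.1 (hle hgmem)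
    have hdvd' : (p:ℕ)^(ν+1) ∣ g.natAbs := by
      have h' := Int.natAbs_dvd_natAbs.2 hdvd
      rwa [Int.natAbs_pow, Int.natAbs_natCast] at h'
    exact Nat.pow_succ_factorization_not_dvd hgne Fact.out hdvd'
  -- rational values
  set α : ℚ := (fun i => (a i : ℚ)) ⬝ᵥ f.A.mulVec (fun i => (a i : ℚ)) with hα
  set β : ℚ := f.b ⬝ᵥ (fun i => (a i : ℚ)) with hβ
  have hαβ : α + β = (d₀ : ℚ) := by
    have : f.eval (fun i => (a i : ℚ)) = α + β + f.m := rfl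
    rw [this] at ha
    linarith
  set A : ℚ_[p] := ((α : ℚ) : ℚ_[p]) with hA
  set B : ℚ_[p] := ((β : ℚ) : ℚ_[p]) with hB
  set M : ℚ_[p] := ((f.m : ℚ) : ℚ_[p]) with hM
  have hABd : A + B = ((d₀:ℤ) : ℚ_[p]) := by
    rw [hA, hB, ← Rat.cast_add, hαβ, Rat.cast_intCast]
  obtain ⟨hd₀ne, hd₀n⟩ := aux_norm_lb (p := p) ν hnd₀
  have hN : (p:ℝ)^(-(ν:ℤ)) ≤ ‖A + B‖ := by rw [hABd]; exact hd₀n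
  have hABne : A + B ≠ 0 := by rw [hABd]; exact hd₀ne
  obtain ⟨h2low', h2up⟩ := aux_norm_two (p := p)
  have h2low : (p:ℝ)^(-(δ:ℤ)) ≤ ‖(2:ℚ_[p])‖ := by rw [hδ]; exact h2low'
  -- real-number abbreviations
  set ρ : ℝ := (p:ℝ)^(-(ν:ℤ)) with hρ
  set σ : ℝ := (p:ℝ)^(-(δ:ℤ)) with hσ
  have hρpos : 0 < ρ := by rw [hρ]; positivity
  have hσpos : 0 < σ := by rw [hσ]; positivity
  have hσ1 : σ ≤ 1 := by
    rw [hσ]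
    calc (p:ℝ)^(-(δ:ℤ)) ≤ (p:ℝ)^(0:ℤ) := zpow_le_zpow_right₀ hp1.le (by omega)
      _ = 1 := zpow_zero _
  have hπ : (p:ℝ) * (p:ℝ)^(-1:ℤ) = 1 := by
    rw [_root_.zpow_neg_one]
    exact mul_inv_cancel₀ (ne_of_gt hppos)
  have hπpos : 0 < (p:ℝ)^(-1:ℤ) := by positivity
  have hπ1 : (p:ℝ)^(-1:ℤ) ≤ 1 := by
    calc (p:ℝ)^(-1:ℤ) ≤ (p:ℝ)^(0:ℤ) := zpow_le_zpow_right₀ hp1.le (by omega)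
      _ = 1 := zpow_zero _
  have hkeq : (p:ℝ)^(-(k:ℤ)) = σ * σ * ρ * (p:ℝ)^(-1:ℤ) := by
    rw [hσ, hρ]
    rw [← zpow_add₀ (ne_of_gt hppos), ← zpow_add₀ (ne_of_gt hppos),
      ← zpow_add₀ (ne_of_gt hppos)]
    congr 1
    rw [hk]
    push_cast
    ring
  -- Step 2: choose the base point t₀
  obtain ⟨t₀, ht₀, hdne, hc1, hc2⟩ :
      ∃ t₀ : ℚ_[p], (t₀ = 0 ∨ t₀ = 1) ∧ (B + 2*A*t₀ ≠ 0) ∧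
        ((p:ℝ)^(-(k:ℤ)) ≤ ‖B + 2*A*t₀‖) ∧
        ((p:ℝ) * ‖A‖ * (p:ℝ)^(-(k:ℤ)) ≤ ‖B + 2*A*t₀‖^2) := by
    rcases le_or_gt ‖B‖ ‖A‖ with hcase | hcase
    · -- ‖B‖ ≤ ‖A‖
      have hA1 : ρ ≤ ‖A‖ := by
        refine le_trans hN (le_trans (Padic.nonarchimedean A B) ?_)
        rw [max_eq_left hcase]
      obtain ⟨t₀, ht₀, hdlow⟩ :
          ∃ t₀ : ℚ_[p], (t₀ = 0 ∨ t₀ = 1) ∧ ‖(2:ℚ_[p])‖*‖A‖ ≤ ‖B + 2*A*t₀‖ := by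
        rcases le_or_gt (‖(2:ℚ_[p])‖*‖A‖) ‖B + 2*A‖ with h | h
        · exact ⟨1, Or.inr rfl, by rw [mul_one]; exact h⟩
        · refine ⟨0, Or.inl rfl, ?_⟩
          have h2A : ‖(2:ℚ_[p])*A‖ = ‖(2:ℚ_[p])‖*‖A‖ := norm_mul _ _
          have hne : ‖B + 2*A‖ ≠ ‖-(2*A)‖ := by
            rw [norm_neg, h2A]; exact ne_of_lt h
          have hmx := Padic.add_eq_max_of_ne hne
          have hsum : (B + 2*A) + (-(2*A)) = B := by ring
          rw [hsum] at hmx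
          have hBeq : ‖B‖ = ‖(2:ℚ_[p])‖*‖A‖ := by
            rw [hmx, norm_neg, h2A, max_eq_right h.le]
          rw [mul_zero, add_zero]
          exact hBeq.ge
      have hdlow' : σ * ρ ≤ ‖B + 2*A*t₀‖ := by
        calc σ * ρ ≤ ‖(2:ℚ_[p])‖ * ‖A‖ :=
              mul_le_mul h2low hA1 hρpos.le (norm_nonneg _)
          _ ≤ _ := hdlow
      have hσπ : σ * (p:ℝ)^(-1:ℤ) ≤ 1 := by nlinarith
      have hσA : σ * ‖A‖ ≤ ‖B + 2*A*t₀‖ :=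
        le_trans (mul_le_mul_of_nonneg_right h2low (norm_nonneg A)) hdlow
      refine ⟨t₀, ht₀, ?_, ?_, ?_⟩
      · intro h0
        rw [h0, norm_zero] at hdlow'
        nlinarith [mul_pos hσpos hρpos]
      · rw [hkeq]
        nlinarith [mul_nonneg (mul_nonneg hσpos.le hρpos.le) (sub_nonneg.2 hσπ), hdlow']
      · rw [hkeq]
        have e2 : (p:ℝ)*‖A‖*(σ*σ*ρ*(p:ℝ)^(-1:ℤ)) = (σ*‖A‖)*(σ*ρ) := by
          linear_combination (‖A‖*σ*σ*ρ) * hπ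
        rw [e2]
        have h3 : σ*ρ ≤ σ*‖A‖ := mul_le_mul_of_nonneg_left hA1 hσpos.le
        have h4 : (σ*‖A‖)*(σ*ρ) ≤ (σ*‖A‖)*(σ*‖A‖) :=
          mul_le_mul_of_nonneg_left h3 (mul_nonneg hσpos.le (norm_nonneg _))
        have h5 : (σ*‖A‖)*(σ*‖A‖) ≤ ‖B + 2*A*t₀‖*‖B + 2*A*t₀‖ :=
          mul_le_mul hσA hσA (mul_nonneg hσpos.le (norm_nonneg _)) (norm_nonneg _)
        calc (σ*‖A‖)*(σ*ρ) ≤ (σ*‖A‖)*(σ*‖A‖) := h4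
          _ ≤ ‖B + 2*A*t₀‖*‖B + 2*A*t₀‖ := h5
          _ = ‖B + 2*A*t₀‖^2 := (sq ‖B + 2*A*t₀‖).symm
    · -- ‖A‖ < ‖B‖
      have hBN : ρ ≤ ‖B‖ := by
        refine le_trans hN ?_
        rw [Padic.add_eq_max_of_ne (ne_of_lt hcase), max_eq_right hcase.le]
      have hpA : (p:ℝ) * ‖A‖ ≤ ‖B‖ := aux_discrete hcase
      have hklow : (p:ℝ)^(-(k:ℤ)) ≤ ρ := by
        rw [hρ]
        exact zpow_le_zpow_right₀ hp1.le (by rw [hk]; push_cast; omega)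
      refine ⟨0, Or.inl rfl, ?_, ?_, ?_⟩
      · rw [mul_zero, add_zero]
        intro h0
        rw [h0, norm_zero] at hBN
        linarith
      · rw [mul_zero, add_zero]
        exact le_trans hklow hBN
      · rw [mul_zero, add_zero]
        have h1 : (p:ℝ)^(-(k:ℤ)) ≤ ‖B‖ := le_trans hklow hBN
        have h2 : (0:ℝ) < (p:ℝ)^(-(k:ℤ)) := by positivity
        calc (p:ℝ)*‖A‖*(p:ℝ)^(-(k:ℤ)) ≤ ‖B‖ * (p:ℝ)^(-(k:ℤ)) :=
              mul_le_mul_of_nonneg_right hpA h2.le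
          _ ≤ ‖B‖*‖B‖ := mul_le_mul_of_nonneg_left h1 (norm_nonneg _)
          _ = ‖B‖^2 := (sq ‖B‖).symm
  -- integrality of the constant term
  obtain ⟨z₀, hz₀⟩ := hint (fun _ => 0)
  have hm : f.m = (z₀ : ℚ) := by
    have h0 : f.eval (fun i => (((fun _ => (0:ℤ)) i : ℤ) : ℚ)) = f.m := by
      simp [QuadPoly.eval]
    rw [h0] at hz₀
    exact hz₀
  have hrnorm : ‖M + A*t₀^2 + B*t₀‖ ≤ 1 := by
    have hMz : M = ((z₀:ℤ) : ℚ_[p]) := by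
      rw [hM, hm]; push_cast; ring
    rcases ht₀ with rfl | rfl
    · simp only [mul_zero, add_zero, zero_pow, mul_zero, ne_eq, OfNat.ofNat_ne_zero,
        not_false_eq_true]
      rw [hMz]
      exact Padic.norm_int_le_one _
    · have : M + A*1^2 + B*1 = (((z₀ + d₀ :ℤ)) : ℚ_[p]) := by
        rw [hMz]
        push_cast
        have := hABd
        push_cast at this
        linear_combination this
      rw [this]
      exact Padic.norm_int_le_one _
  refine ⟨k, by omega, ⟨M + A*t₀^2 + B*t₀, hrnorm⟩, ?_⟩
  intro t
  set w : ℚ_[p] := (p:ℚ_[p])^k * (t:ℚ_[p]) with hw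
  have hwn : ‖w‖ ≤ (p:ℝ)^(-(k:ℤ)) := by
    rw [hw, norm_mul, norm_pow, Padic.norm_p]
    have ht1 : ‖(t:ℚ_[p])‖ ≤ 1 := t.2
    have : ((p:ℝ)⁻¹)^k = (p:ℝ)^(-(k:ℤ)) := by
      rw [inv_pow, ← _root_.zpow_natCast (p:ℝ) k, ← _root_.zpow_neg]
    calc ((p:ℝ)⁻¹)^k * ‖(t:ℚ_[p])‖ ≤ ((p:ℝ)⁻¹)^k * 1 := by
          refine mul_le_mul_of_nonneg_left ht1 (by positivity)
      _ = (p:ℝ)^(-(k:ℤ)) := by rw [mul_one, this]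
  have hcond : (p:ℝ) * (‖A‖ * ‖w‖) ≤ ‖B + 2*A*t₀‖^2 := by
    have h2 : (0:ℝ) ≤ ‖A‖ := norm_nonneg _
    calc (p:ℝ) * (‖A‖ * ‖w‖) ≤ (p:ℝ) * (‖A‖ * (p:ℝ)^(-(k:ℤ))) :=
          mul_le_mul_of_nonneg_left (mul_le_mul_of_nonneg_left hwn h2) hppos.le
      _ = (p:ℝ) * ‖A‖ * (p:ℝ)^(-(k:ℤ)) := (mul_assoc _ _ _).symm
      _ ≤ ‖B + 2*A*t₀‖^2 := hc2
  obtain ⟨s, hs1, hs2⟩ := aux_key A (B + 2*A*t₀) w hdne (le_trans hwn hc1) hcond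
  have ht₀n : ‖t₀‖ ≤ 1 := by rcases ht₀ with rfl | rfl <;> simp
  have hTn : ‖t₀ + s‖ ≤ 1 := by
    refine le_trans (Padic.nonarchimedean _ _) (max_le ht₀n hs1)
  obtain ⟨T, hT⟩ : ∃ T : ℤ_[p], (T : ℚ_[p]) = t₀ + s := ⟨⟨t₀ + s, hTn⟩, rfl⟩
  refine ⟨fun i => T * ((a i : ℤ) : ℤ_[p]), ?_⟩
  have hxcast : (fun i => ((T * ((a i : ℤ) : ℤ_[p]) : ℤ_[p]) : ℚ_[p]))
      = fun i => (t₀ + s) * ((a i : ℤ) : ℚ_[p]) := by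
    funext i
    push_cast [hT]
    ring
  rw [hxcast, aux_eval_cast f a (t₀ + s), ← hα, ← hβ, ← hA, ← hB, ← hM]
  have hr : ((⟨M + A*t₀^2 + B*t₀, hrnorm⟩ : ℤ_[p]) : ℚ_[p]) = M + A*t₀^2 + B*t₀ := rfl
  rw [hr]
  linear_combination hs2
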